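/- Let E be a set, let L be any map sending real-valued functions on E to real-valued functions on E, and let p, φ : E → ℝ be nowhere-vanishing functions. Define (Lrev f)(x) := p(x)⁻¹·(L(p·f)(x) − f(x)·(L p)(x)), (K f)(x) := φ(x)⁻¹·(L(φ·f)(x) − f(x)·(L φ)(x)), and η := φ/p (pointwise). Then for every function f : E → ℝ and every x ∈ E, η(x)⁻¹·(Lrev f)(x) = K(η⁻¹·f)(x) − f(x)·(K η⁻¹)(x), where η⁻¹ denotes the pointwise reciprocal of η. -/
import Mathlib

/-- With `Lrev`, `K`, and `η = φ / p` defined as in the denoising Markov model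
framework from any map `L` and nowhere-vanishing `p, φ`, the roles of `Lrev` and `K` can be
exchanged with `η` replaced by its pointwise reciprocal:
`η x⁻¹ * Lrev f x = K (η⁻¹ * f) x - f x * K η⁻¹ x`. -/
theorem stmt1 {E : Type*} (L : (E → ℝ) → (E → ℝ)) (p φ : E → ℝ)
    (hp : ∀ x, p x ≠ 0) (hφ : ∀ x, φ x ≠ 0)
    (Lrev : (E → ℝ) → (E → ℝ))
    (hLrev : ∀ (f : E → ℝ) (x : E),
      Lrev f x = (p x)⁻¹ * (L (fun y => p y * f y) x - f x * L p x))
    (K : (E → ℝ) → (E → ℝ))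
    (hK : ∀ (f : E → ℝ) (x : E),
      K f x = (φ x)⁻¹ * (L (fun y => φ y * f y) x - f x * L φ x))
    (η : E → ℝ) (hη : ∀ x, η x = φ x / p x) :
    ∀ (f : E → ℝ) (x : E),
      (η x)⁻¹ * Lrev f x
        = K (fun y => (η y)⁻¹ * f y) x - f x * K (fun y => (η y)⁻¹) x := by
  intro f x
  have h1 : (fun y => φ y * ((η y)⁻¹ * f y)) = (fun y => p y * f y) := by
    funext y
    rw [hη]
    field_simp [hφ y, hp y]
  have h2 : (fun y => φ y * (η y)⁻¹) = p := by
    funext y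
    rw [hη]
    field_simp [hφ y, hp y]
  rw [hLrev, hK, hK, h1, h2, hη]
  field_simp [hp x, hφ x]
  ring
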